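/- Fix n ∈ ℕ and ε > 0. Suppose x ∈ ℝ^d, f₁,…,fₙ : ℝ^d → ℝ, and (p,q) ∈ ℤ × ℤⁿ with q ≠ 0 satisfies |p + q₁f₁(x) + … + qₙfₙ(x)| < Π₊(q)^{-1-ε}. Let r = Π₊(q)^{-ε/(n+1)}, and for each i let tᵢ ∈ ℤ_{≥0} be minimal with e^{-tᵢ} max{1,|qᵢ|} ≤ r, and t = t₁+…+tₙ. Then e^t |p + q₁f₁(x) + … + qₙfₙ(x)| < eⁿ r and e^{-tᵢ}|qᵢ| ≤ r for all i; consequently the lattice g_t u_{f(x)} ℤ^{n+1} contains a nonzero vector of supremum norm at most eⁿ r, i.e. δ(g_t u_{f(x)} ℤ^{n+1}) < eⁿ r. -/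

import Mathlib

open scoped BigOperators

/-- `Π₊(q)`: product of `|qᵢ|` over the nonzero coordinates (empty product = 1). -/
noncomputable def PiPlus {n : ℕ} (q : Fin n → ℤ) : ℝ :=
  ∏ i, if q i = 0 then (1 : ℝ) else |(q i : ℝ)|

/-- If `|p + ∑ qᵢ fᵢ(x)| < Π₊(q)^{-1-ε}`, `r = Π₊(q)^{-ε/(n+1)}` and `tᵢ` is
minimal with `e^{-tᵢ} max{1,|qᵢ|} ≤ r`, `t = ∑ tᵢ`, then
`e^t |p + ∑ qᵢ fᵢ(x)| < eⁿ r`, `e^{-tᵢ}|qᵢ| ≤ r` for all `i`, and consequently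
the lattice `g_t u_{f(x)} ℤ^{n+1}` contains a nonzero vector of sup norm
`< eⁿ r`, i.e. `δ(g_t u_{f(x)} ℤ^{n+1}) < eⁿ r`. -/
theorem lattice_short_vector (n : ℕ) (ε : ℝ) (hε : 0 < ε)
    (x : Fin n → ℝ) -- plays no role beyond evaluating the fᵢ; kept for faithfulness
    (f : Fin n → ℝ) -- fᵢ(x) for the given x
    (p : ℤ) (q : Fin n → ℤ) (hq : q ≠ 0)
    (happrox : |(p : ℝ) + ∑ i, (q i : ℝ) * f i| < (PiPlus q) ^ (-(1 + ε)))
    (r : ℝ) (hr : r = (PiPlus q) ^ (-(ε / ((n : ℝ) + 1))))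
    (t : Fin n → ℕ)
    (ht : ∀ i, Real.exp (-(t i : ℝ)) * max 1 |(q i : ℝ)| ≤ r)
    (htmin : ∀ i, ∀ s : ℕ, s < t i → ¬ (Real.exp (-(s : ℝ)) * max 1 |(q i : ℝ)| ≤ r)) :
    (Real.exp ((∑ i, t i : ℕ) : ℝ) * |(p : ℝ) + ∑ i, (q i : ℝ) * f i|
        < Real.exp (n : ℝ) * r) ∧
    (∀ i, Real.exp (-(t i : ℝ)) * |(q i : ℝ)| ≤ r) ∧
    (∃ v : Fin (n + 1) → ℝ,
      v = Fin.cons (Real.exp ((∑ i, t i : ℕ) : ℝ) * ((p : ℝ) + ∑ i, (q i : ℝ) * f i))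
            (fun i => Real.exp (-(t i : ℝ)) * (q i : ℝ)) ∧
      v ≠ 0 ∧ ∀ j, |v j| < Real.exp (n : ℝ) * r) := by
  classical
  have hn : n ≠ 0 := by rintro rfl; exact hq (funext fun i => i.elim0)
  have hPP1 : (1 : ℝ) ≤ PiPlus q := by
    unfold PiPlus
    calc (1:ℝ) = ∏ _i : Fin n, 1 := by simp
      _ ≤ ∏ i, if q i = 0 then (1:ℝ) else |(q i : ℝ)| := by
        apply Finset.prod_le_prod (fun i _ => zero_le_one)
        intro i _
        split_ifs with h
        · exact le_rfl
        · have h1 : (1 : ℤ) ≤ |q i| := Int.one_le_abs h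
          calc (1:ℝ) ≤ |(q i : ℤ)| := by exact_mod_cast h1
            _ = |(q i : ℝ)| := by push_cast; rfl
  have hPP0 : (0 : ℝ) < PiPlus q := lt_of_lt_of_le one_pos hPP1
  have hr0 : (0 : ℝ) < r := hr ▸ Real.rpow_pos_of_pos hPP0 _
  have hr1 : r ≤ 1 := by
    rw [hr]
    apply Real.rpow_le_one_of_one_le_of_nonpos hPP1
    have : (0:ℝ) < (n:ℝ) + 1 := by positivity
    have : 0 ≤ ε / ((n:ℝ) + 1) := le_of_lt (div_pos hε this)
    linarith
  have hone_le_exp : (1:ℝ) ≤ Real.exp 1 := by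
    have := Real.add_one_le_exp (1:ℝ); linarith
  -- per-coordinate key bound
  have key : ∀ i, Real.exp ((t i : ℝ)) * r ≤ Real.exp 1 * max 1 |(q i : ℝ)| := by
    intro i
    have hmax : (1:ℝ) ≤ max 1 |(q i : ℝ)| := le_max_left _ _
    rcases Nat.eq_zero_or_pos (t i) with h | h
    · rw [h]
      simp only [Nat.cast_zero, Real.exp_zero, one_mul]
      nlinarith
    · obtain ⟨s, hs⟩ : ∃ s, t i = s + 1 := ⟨t i - 1, by omega⟩
      have h2 := htmin i s (by omega)
      push_neg at h2
      have h3 : Real.exp ((s:ℝ)) * r < max 1 |(q i : ℝ)| := by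
        have hes : (0:ℝ) < Real.exp ((s:ℝ)) := Real.exp_pos _
        have := mul_lt_mul_of_pos_left h2 hes
        rwa [← mul_assoc, ← Real.exp_add, add_neg_cancel, Real.exp_zero, one_mul] at this
      have : Real.exp ((t i : ℝ)) = Real.exp 1 * Real.exp ((s:ℝ)) := by
        rw [hs, ← Real.exp_add]; push_cast; ring_nf
      rw [this]
      calc Real.exp 1 * Real.exp ((s:ℝ)) * r = Real.exp 1 * (Real.exp ((s:ℝ)) * r) := by ring
        _ ≤ Real.exp 1 * max 1 |(q i : ℝ)| :=
            mul_le_mul_of_nonneg_left h3.le (Real.exp_pos 1).le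
  have hprodmax : ∏ i, max 1 |(q i : ℝ)| = PiPlus q := by
    unfold PiPlus
    apply Finset.prod_congr rfl
    intro i _
    split_ifs with h
    · simp [h]
    · apply max_eq_right
      have h1 : (1 : ℤ) ≤ |q i| := Int.one_le_abs h
      calc (1:ℝ) ≤ |(q i : ℤ)| := by exact_mod_cast h1
        _ = |(q i : ℝ)| := by push_cast; rfl
  have hexp_t : Real.exp ((∑ i, t i : ℕ) : ℝ) = ∏ i, Real.exp ((t i : ℝ)) := by
    rw [← Real.exp_sum]
    congr 1
    push_cast
    rfl
  have hexp_pow : Real.exp 1 ^ n = Real.exp (n : ℝ) := by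
    rw [← Real.exp_nat_mul]; norm_num
  have hbound : Real.exp ((∑ i, t i : ℕ) : ℝ) * r ^ n ≤ Real.exp (n:ℝ) * PiPlus q := by
    have hprodle : ∏ i, (Real.exp ((t i : ℝ)) * r) ≤ ∏ i, (Real.exp 1 * max 1 |(q i : ℝ)|) :=
      Finset.prod_le_prod (fun i _ => by positivity) (fun i _ => key i)
    rw [Finset.prod_mul_distrib, Finset.prod_mul_distrib, Finset.prod_const, Finset.prod_const,
      Finset.card_univ, Fintype.card_fin, hprodmax, hexp_pow] at hprodle
    rwa [hexp_t]
  -- exponent arithmetic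
  have hr_pow : r ^ (n + 1) = PiPlus q ^ (-ε) := by
    rw [hr, ← Real.rpow_natCast (PiPlus q ^ (-(ε / ((n : ℝ) + 1)))) (n+1),
      ← Real.rpow_mul hPP0.le]
    congr 1
    have hne : ((n:ℝ) + 1) ≠ 0 := by positivity
    push_cast
    field_simp
  have hcomb : Real.exp (n:ℝ) * PiPlus q / r ^ n * PiPlus q ^ (-(1 + ε))
      = Real.exp (n:ℝ) * r := by
    have h1 : PiPlus q * PiPlus q ^ (-(1 + ε)) = PiPlus q ^ (-ε) := by
      have := Real.rpow_add hPP0 1 (-(1+ε))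
      rw [Real.rpow_one] at this
      rw [← this]
      ring_nf
    calc Real.exp (n:ℝ) * PiPlus q / r ^ n * PiPlus q ^ (-(1 + ε))
        = Real.exp (n:ℝ) * (PiPlus q * PiPlus q ^ (-(1 + ε))) / r ^ n := by ring
      _ = Real.exp (n:ℝ) * (r ^ (n+1)) / r ^ n := by rw [h1, hr_pow]
      _ = Real.exp (n:ℝ) * r := by
          rw [pow_succ]
          field_simp
  -- Part 1
  have part1 : Real.exp ((∑ i, t i : ℕ) : ℝ) * |(p : ℝ) + ∑ i, (q i : ℝ) * f i|
      < Real.exp (n : ℝ) * r := by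
    have hrn : (0:ℝ) < r ^ n := by positivity
    have hle : Real.exp ((∑ i, t i : ℕ) : ℝ) ≤ Real.exp (n:ℝ) * PiPlus q / r ^ n :=
      (le_div_iff₀ hrn).mpr hbound
    calc Real.exp ((∑ i, t i : ℕ) : ℝ) * |(p : ℝ) + ∑ i, (q i : ℝ) * f i|
        < Real.exp ((∑ i, t i : ℕ) : ℝ) * PiPlus q ^ (-(1 + ε)) :=
          mul_lt_mul_of_pos_left happrox (Real.exp_pos _)
      _ ≤ (Real.exp (n:ℝ) * PiPlus q / r ^ n) * PiPlus q ^ (-(1 + ε)) :=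
          mul_le_mul_of_nonneg_right hle (Real.rpow_nonneg hPP0.le _)
      _ = Real.exp (n:ℝ) * r := hcomb
  -- Part 2
  have part2 : ∀ i, Real.exp (-(t i : ℝ)) * |(q i : ℝ)| ≤ r := fun i =>
    le_trans (mul_le_mul_of_nonneg_left (le_max_right 1 _) (Real.exp_pos _).le) (ht i)
  refine ⟨part1, part2, _, rfl, ?_, ?_⟩
  · -- v ≠ 0
    obtain ⟨i, hi⟩ := Function.ne_iff.mp hq
    intro h0
    have := congrFun h0 i.succ
    simp only [Fin.cons_succ, Pi.zero_apply] at this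
    have hqi : (q i : ℝ) = 0 := by
      rcases mul_eq_zero.mp this with h | h
      · exact absurd h (Real.exp_ne_zero _)
      · exact h
    exact hi (by exact_mod_cast hqi)
  · -- sup-norm bound
    have h1n : (1:ℝ) < Real.exp (n:ℝ) := by
      have : (0:ℝ) < (n:ℝ) := by
        have : 1 ≤ n := Nat.one_le_iff_ne_zero.mpr hn
        exact_mod_cast Nat.lt_of_lt_of_le Nat.zero_lt_one this
      calc (1:ℝ) = Real.exp 0 := Real.exp_zero.symm
        _ < Real.exp (n:ℝ) := Real.exp_lt_exp.mpr this
    intro j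
    refine Fin.cases ?_ ?_ j
    · rw [Fin.cons_zero, abs_mul, Real.abs_exp]
      exact part1
    · intro i
      rw [Fin.cons_succ, abs_mul, Real.abs_exp]
      calc Real.exp (-(t i : ℝ)) * |(q i : ℝ)| ≤ r := part2 i
        _ < Real.exp (n:ℝ) * r := by nlinarith
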